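/- For N ≥ 3 and U_ε(x) = c_N (ε/(ε²+|x|²))^{(N-2)/2}, the integral of U_ε^{2N/(N-2)} over the slab ℝ^{N-1} × (0,1) satisfies ∫_{ℝ^{N-1}×(0,1)} U_ε^{2N/(N-2)} = c_N^{2N/(N-2)} [ ∫_{ℝ^N_+} (1+|y|²)^{-N} dy − (ε^N/N) ∫_{ℝ^{N-1}} (1+|y'|²)^{-N} dy' + o(ε^N) ] as ε → 0⁺, where ℝ^N_+ = ℝ^{N-1} × (0,∞). -/

import Mathlib

open MeasureTheory Set Filter Asymptotics Module

noncomputable section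

abbrev Eucl (n : ℕ) := EuclideanSpace ℝ (Fin n)

instance euclProdHaar (n : ℕ) : (volume : Measure (Eucl n × ℝ)).IsAddHaarMeasure :=
  Measure.prod.instIsAddHaarMeasure _ _

lemma finrank_eucl_prod (n : ℕ) : finrank ℝ (Eucl n × ℝ) = n + 1 := by
  simp [Module.finrank_prod, finrank_euclideanSpace_fin]

lemma integrableK (n N : ℕ) (h : (n : ℝ) < 2 * N) :
    Integrable (fun y : Eucl n => ((1 : ℝ) + ‖y‖ ^ 2) ^ (-(N : ℝ))) := by
  have := integrable_rpow_neg_one_add_norm_sq (E := Eucl n) (μ := volume)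
    (r := 2 * N) (by simpa [finrank_euclideanSpace_fin] using h)
  convert this using 2 with y
  ring_nf

lemma integrableG (n N : ℕ) (h : ((n : ℝ) + 1) < 2 * N) :
    Integrable (fun y : Eucl n × ℝ => ((1 : ℝ) + ‖y.1‖ ^ 2 + y.2 ^ 2) ^ (-(N : ℝ))) := by
  have key : ∀ y : Eucl n × ℝ,
      ‖((1 : ℝ) + ‖y.1‖ ^ 2 + y.2 ^ 2) ^ (-(N : ℝ))‖
        ≤ (2 : ℝ) ^ (N : ℝ) * (1 + ‖y‖) ^ (-(2 * N : ℝ)) := by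
    intro y
    have h1 : (0:ℝ) < 1 + ‖y.1‖ ^ 2 + y.2 ^ 2 := by positivity
    have hsq : ‖y‖ ^ 2 ≤ ‖y.1‖ ^ 2 + y.2 ^ 2 := by
      have : ‖y‖ = max ‖y.1‖ ‖y.2‖ := rfl
      rw [this]
      rcases max_cases ‖y.1‖ ‖y.2‖ with ⟨h, _⟩ | ⟨h, _⟩ <;> rw [h] <;>
        [skip; rw [Real.norm_eq_abs, sq_abs]] <;> nlinarith [sq_nonneg ‖y.1‖, sq_nonneg ‖y.2‖,
          norm_nonneg y.1, norm_nonneg y.2, Real.norm_eq_abs y.2]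
    have h2 : ((1:ℝ) + ‖y‖) ^ 2 / 2 ≤ 1 + ‖y.1‖ ^ 2 + y.2 ^ 2 := by
      nlinarith [sq_nonneg (1 - ‖y‖), norm_nonneg y]
    have h3 : (0:ℝ) < (1 + ‖y‖) ^ 2 / 2 := by positivity
    rw [Real.norm_eq_abs, abs_of_nonneg (Real.rpow_nonneg h1.le _)]
    calc ((1 : ℝ) + ‖y.1‖ ^ 2 + y.2 ^ 2) ^ (-(N : ℝ))
        ≤ (((1:ℝ) + ‖y‖) ^ 2 / 2) ^ (-(N : ℝ)) :=
          Real.rpow_le_rpow_of_nonpos h3 h2 (neg_nonpos.mpr (Nat.cast_nonneg N))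
      _ = (2 : ℝ) ^ (N : ℝ) * (1 + ‖y‖) ^ (-(2 * N : ℝ)) := by
          rw [div_eq_mul_inv, Real.mul_rpow (by positivity) (by positivity),
            ← Real.rpow_natCast ((1:ℝ) + ‖y‖) 2, ← Real.rpow_mul (by positivity),
            Real.inv_rpow (by norm_num), ← Real.rpow_neg (by norm_num)]
          ring_nf
  have hint : Integrable (fun y : Eucl n × ℝ =>
      (2 : ℝ) ^ (N : ℝ) * (1 + ‖y‖) ^ (-(2 * N : ℝ))) := by
    refine (integrable_one_add_norm (E := Eucl n × ℝ) (μ := volume) ?_).const_mul _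
    rw [finrank_eucl_prod]
    push_cast
    linarith
  refine hint.mono' ?_ (Eventually.of_forall key)
  have hcont : Continuous fun y : Eucl n × ℝ => (1 : ℝ) + ‖y.1‖ ^ 2 + y.2 ^ 2 := by fun_prop
  exact (hcont.rpow_const fun y => Or.inl (by positivity)).aestronglyMeasurable

lemma inner_scaling (n N : ℕ) (t : ℝ) :
    (∫ y : Eucl n, ((1 : ℝ) + ‖y‖ ^ 2 + t ^ 2) ^ (-(N : ℝ)))
      = ((1 : ℝ) + t ^ 2) ^ ((n : ℝ) / 2 - N) *
        ∫ z : Eucl n, ((1 : ℝ) + ‖z‖ ^ 2) ^ (-(N : ℝ)) := by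
  set a : ℝ := Real.sqrt (1 + t ^ 2) with ha_def
  have hpos : (0:ℝ) < 1 + t ^ 2 := by positivity
  have ha : 0 < a := Real.sqrt_pos.mpr hpos
  have ha2 : a ^ 2 = 1 + t ^ 2 := Real.sq_sqrt hpos.le
  have key := MeasureTheory.Measure.integral_comp_smul_of_nonneg (μ := (volume : Measure (Eucl n)))
    (f := fun y : Eucl n => ((1 : ℝ) + ‖y‖ ^ 2 + t ^ 2) ^ (-(N : ℝ))) (R := a) (hR := ha.le)
  have hcomp : ∀ z : Eucl n, ((1 : ℝ) + ‖a • z‖ ^ 2 + t ^ 2) ^ (-(N : ℝ))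
      = ((1 : ℝ) + t ^ 2) ^ (-(N : ℝ)) * ((1 : ℝ) + ‖z‖ ^ 2) ^ (-(N : ℝ)) := by
    intro z
    have : (1 : ℝ) + ‖a • z‖ ^ 2 + t ^ 2 = (1 + t ^ 2) * (1 + ‖z‖ ^ 2) := by
      rw [norm_smul, Real.norm_eq_abs, mul_pow, sq_abs, ha2]; ring
    rw [this, Real.mul_rpow hpos.le (by positivity)]
  rw [funext hcomp, integral_const_mul, finrank_euclideanSpace_fin] at key
  have han : (a ^ n : ℝ) = ((1 : ℝ) + t ^ 2) ^ ((n : ℝ) / 2) := by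
    rw [ha_def, Real.sqrt_eq_rpow, ← Real.rpow_natCast (((1:ℝ) + t ^ 2) ^ ((1:ℝ)/2)) n,
      ← Real.rpow_mul hpos.le]
    ring_nf
  have := congrArg (fun x => (a ^ n : ℝ) * x) key
  simp only [smul_eq_mul, ← mul_assoc, mul_inv_cancel₀ (pow_ne_zero n ha.ne'), one_mul] at this
  rw [han] at this
  rw [← this, ← Real.rpow_add hpos]
  ring_nf

lemma fubini_slab (n N : ℕ) (h : ((n : ℝ) + 1) < 2 * N) (s : Set ℝ) :
    (∫ y in (univ ×ˢ s : Set (Eucl n × ℝ)), ((1 : ℝ) + ‖y.1‖ ^ 2 + y.2 ^ 2) ^ (-(N : ℝ)))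
      = ∫ t in s, ((1 : ℝ) + t ^ 2) ^ ((n : ℝ) / 2 - N) *
          ∫ z : Eucl n, ((1 : ℝ) + ‖z‖ ^ 2) ^ (-(N : ℝ)) := by
  have hrestr : (volume : Measure (Eucl n × ℝ)).restrict (univ ×ˢ s)
      = (volume : Measure (Eucl n)).prod ((volume : Measure ℝ).restrict s) := by
    rw [Measure.volume_eq_prod, ← Measure.prod_restrict, Measure.restrict_univ]
  have hint : Integrable (fun y : Eucl n × ℝ => ((1 : ℝ) + ‖y.1‖ ^ 2 + y.2 ^ 2) ^ (-(N : ℝ)))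
      ((volume : Measure (Eucl n)).prod ((volume : Measure ℝ).restrict s)) := by
    rw [← hrestr]
    exact (integrableG n N h).integrableOn
  calc (∫ y in (univ ×ˢ s : Set (Eucl n × ℝ)), ((1 : ℝ) + ‖y.1‖ ^ 2 + y.2 ^ 2) ^ (-(N : ℝ)))
      = ∫ y, ((1 : ℝ) + ‖y.1‖ ^ 2 + y.2 ^ 2) ^ (-(N : ℝ))
          ∂((volume : Measure (Eucl n)).prod ((volume : Measure ℝ).restrict s)) := by
        rw [hrestr]
    _ = ∫ t in s, ∫ y' : Eucl n, ((1 : ℝ) + ‖y'‖ ^ 2 + t ^ 2) ^ (-(N : ℝ)) := by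
        exact MeasureTheory.integral_prod_symm _ hint
    _ = ∫ t in s, ((1 : ℝ) + t ^ 2) ^ ((n : ℝ) / 2 - N) *
          ∫ z : Eucl n, ((1 : ℝ) + ‖z‖ ^ 2) ^ (-(N : ℝ)) := by
        exact integral_congr_ae (Eventually.of_forall fun t => inner_scaling n N t)

set_option maxHeartbeats 1000000 in
lemma tail_est (N : ℕ) (hN : 3 ≤ N) (T : ℝ) (hT : 1 ≤ T) :
    0 ≤ T ^ (-(N : ℝ)) / N - (∫ t in Ioi T, ((1 : ℝ) + t ^ 2) ^ (-((N : ℝ) + 1) / 2))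
    ∧ T ^ (-(N : ℝ)) / N - (∫ t in Ioi T, ((1 : ℝ) + t ^ 2) ^ (-((N : ℝ) + 1) / 2))
        ≤ ((N : ℝ) + 1) / 2 * T ^ (-(N : ℝ) - 2) := by
  have hT0 : (0 : ℝ) < T := lt_of_lt_of_le one_pos hT
  have hN0 : (0 : ℝ) < N := by positivity
  obtain ⟨s, hs_def⟩ : ∃ s : ℝ, s = ((N : ℝ) + 1) / 2 := ⟨_, rfl⟩
  rw [← hs_def]
  have hs1 : (1 : ℝ) ≤ s := by
    rw [hs_def, le_div_iff₀ (by norm_num : (0:ℝ) < 2)]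
    have : (3:ℝ) ≤ N := by exact_mod_cast hN
    linarith
  have hs0 : (0 : ℝ) < s := lt_of_lt_of_le one_pos hs1
  -- rewrite rpow of squares
  have hsq : ∀ t : ℝ, 0 < t → ∀ e : ℝ, ((t ^ 2 : ℝ)) ^ e = t ^ (2 * e) := by
    intro t ht e
    rw [← Real.rpow_natCast t 2, ← Real.rpow_mul ht.le]
    norm_num
  have hpt1 : ∀ t ∈ Ioi T, ((1 : ℝ) + t ^ 2) ^ (-((N : ℝ) + 1) / 2) ≤ t ^ (-(N : ℝ) - 1) := by
    intro t ht
    have ht0 : (0 : ℝ) < t := lt_trans hT0 ht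
    have h1 : t ^ (-(N : ℝ) - 1) = ((t ^ 2 : ℝ)) ^ (-((N : ℝ) + 1) / 2) := by
      rw [hsq t ht0]; ring_nf
    rw [h1]
    exact Real.rpow_le_rpow_of_nonpos (by positivity) (by nlinarith)
      (by rw [neg_div]; simp; positivity)
  have hpt2 : ∀ t ∈ Ioi T, t ^ (-(N : ℝ) - 1) - ((1 : ℝ) + t ^ 2) ^ (-((N : ℝ) + 1) / 2)
      ≤ s * t ^ (-(N : ℝ) - 3) := by
    intro t ht
    have ht0 : (0 : ℝ) < t := lt_trans hT0 ht
    set a : ℝ := t ^ 2 with ha_def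
    have ha0 : (0 : ℝ) < a := by positivity
    set A : ℝ := 1 + a with hA_def
    have hA0 : (0 : ℝ) < A := by positivity
    have hA1 : (1 : ℝ) ≤ A := by simp [hA_def]; positivity
    -- Bernoulli
    have hbern : 1 - s / A ≤ (a / A) ^ s := by
      have hx : (-1 : ℝ) ≤ -1 / A := by
        rw [neg_div]
        simp only [neg_le_neg_iff]
        rw [div_le_one hA0]; exact hA1
      have := one_add_mul_self_le_rpow_one_add hx hs1
      have he : (1 : ℝ) + -1 / A = a / A := by field_simp; linarith
      rw [he] at this
      calc 1 - s / A = 1 + s * (-1 / A) := by ring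
        _ ≤ (a / A) ^ s := this
    have e1 : t ^ (-(N : ℝ) - 1) = a ^ (-s) := by
      rw [ha_def, hsq t ht0, hs_def]; ring_nf
    have e2 : ((1 : ℝ) + t ^ 2) ^ (-((N : ℝ) + 1) / 2) = A ^ (-s) := by
      rw [hA_def, ha_def, hs_def]; ring_nf
    have e3 : A ^ (-s) = a ^ (-s) * (a / A) ^ s := by
      rw [Real.div_rpow ha0.le hA0.le, ← mul_div_assoc, ← Real.rpow_add ha0, neg_add_cancel,
        Real.rpow_zero, Real.rpow_neg hA0.le, one_div]
    have e4 : a ^ (-s) * (s / a) = s * t ^ (-(N : ℝ) - 3) := by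
      have h5 : a ^ (-s - 1) = t ^ (-(N : ℝ) - 3) := by
        rw [ha_def, hsq t ht0, hs_def]; ring_nf
      have h6 : a ^ (-s - 1) = a ^ (-s) / a := Real.rpow_sub_one ha0.ne' (-s)
      rw [← h5, h6]; ring
    rw [e1, e2, e3]
    have key : a ^ (-s) * (1 - (a / A) ^ s) ≤ a ^ (-s) * (s / a) := by
      apply mul_le_mul_of_nonneg_left _ (Real.rpow_nonneg ha0.le _)
      calc 1 - (a / A) ^ s ≤ s / A := by linarith
        _ ≤ s / a := by
          apply div_le_div_of_nonneg_left hs0.le ha0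
          simp [hA_def]
      
    calc a ^ (-s) - a ^ (-s) * (a / A) ^ s = a ^ (-s) * (1 - (a / A) ^ s) := by ring
      _ ≤ a ^ (-s) * (s / a) := key
      _ = s * t ^ (-(N : ℝ) - 3) := e4
  -- integrability
  have int1 : IntegrableOn (fun t : ℝ => t ^ (-(N : ℝ) - 1)) (Ioi T) :=
    integrableOn_Ioi_rpow_of_lt (by linarith) hT0
  have int3 : IntegrableOn (fun t : ℝ => t ^ (-(N : ℝ) - 3)) (Ioi T) :=
    integrableOn_Ioi_rpow_of_lt (by linarith) hT0
  have intφ : IntegrableOn (fun t : ℝ => ((1 : ℝ) + t ^ 2) ^ (-((N : ℝ) + 1) / 2)) (Ioi T) := by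
    refine int1.mono' ?_ ?_
    · have hcont : Continuous fun t : ℝ => (1 : ℝ) + t ^ 2 := by fun_prop
      exact (hcont.rpow_const fun t => Or.inl (by positivity)).aestronglyMeasurable
    · rw [ae_restrict_iff' measurableSet_Ioi]
      refine Eventually.of_forall fun t ht => ?_
      rw [Real.norm_eq_abs, abs_of_nonneg (Real.rpow_nonneg (by positivity) _)]
      exact hpt1 t ht
  have hpow1 : (∫ t in Ioi T, t ^ (-(N : ℝ) - 1)) = T ^ (-(N : ℝ)) / N := by
    rw [integral_Ioi_rpow_of_lt (by linarith) hT0]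
    have : (-(N : ℝ) - 1) + 1 = -(N : ℝ) := by ring
    rw [this]
    field_simp
  have hpow3 : (∫ t in Ioi T, t ^ (-(N : ℝ) - 3)) = T ^ (-(N : ℝ) - 2) / ((N : ℝ) + 2) := by
    rw [integral_Ioi_rpow_of_lt (by linarith) hT0]
    have : (-(N : ℝ) - 3) + 1 = -(N : ℝ) - 2 := by ring
    rw [this, div_eq_div_iff (by nlinarith : -(N : ℝ) - 2 ≠ 0) (by positivity : (N : ℝ) + 2 ≠ 0)]
    ring
  have hdiff : T ^ (-(N : ℝ)) / N - (∫ t in Ioi T, ((1 : ℝ) + t ^ 2) ^ (-((N : ℝ) + 1) / 2))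
      = ∫ t in Ioi T, (t ^ (-(N : ℝ) - 1) - ((1 : ℝ) + t ^ 2) ^ (-((N : ℝ) + 1) / 2)) := by
    rw [integral_sub int1 intφ, hpow1]
  constructor
  · rw [hdiff]
    apply setIntegral_nonneg measurableSet_Ioi
    intro t ht
    have := hpt1 t ht
    linarith
  · rw [hdiff]
    have intsub : IntegrableOn
        (fun t : ℝ => t ^ (-(N : ℝ) - 1) - ((1 : ℝ) + t ^ 2) ^ (-((N : ℝ) + 1) / 2)) (Ioi T) := by
      exact int1.sub intφ
    calc (∫ t in Ioi T, (t ^ (-(N : ℝ) - 1) - ((1 : ℝ) + t ^ 2) ^ (-((N : ℝ) + 1) / 2)))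
        ≤ ∫ t in Ioi T, s * t ^ (-(N : ℝ) - 3) :=
          setIntegral_mono_on intsub (int3.const_mul s) measurableSet_Ioi hpt2
      _ = s * (T ^ (-(N : ℝ) - 2) / ((N : ℝ) + 2)) := by rw [integral_const_mul, hpow3]
      _ ≤ s * T ^ (-(N : ℝ) - 2) := by
          have hX : (0:ℝ) ≤ T ^ (-(N : ℝ) - 2) := Real.rpow_nonneg hT0.le _
          exact mul_le_mul_of_nonneg_left (div_le_self hX (by linarith)) hs0.le

open Pointwise in
lemma smul_slab_eq (n : ℕ) {ε : ℝ} (hε : 0 < ε) (T : ℝ) :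
    ε • ((univ : Set (Eucl n)) ×ˢ Ioo (0:ℝ) T) = (univ : Set (Eucl n)) ×ˢ Ioo 0 (ε * T) := by
  have h1 : ε • ((univ : Set (Eucl n)) ×ˢ Ioo (0:ℝ) T)
      = (ε • (univ : Set (Eucl n))) ×ˢ (ε • Ioo (0:ℝ) T) := by
    ext ⟨a, b⟩
    simp only [Set.mem_smul_set, Set.mem_prod, Prod.ext_iff, Prod.smul_fst, Prod.smul_snd]
    constructor
    · rintro ⟨⟨z, u⟩, ⟨hz, hu⟩, h1, h2⟩
      exact ⟨⟨z, hz, h1⟩, ⟨u, hu, h2⟩⟩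
    · rintro ⟨⟨z, hz, h1⟩, ⟨u, hu, h2⟩⟩
      exact ⟨(z, u), ⟨hz, hu⟩, h1, h2⟩
  rw [h1, Set.smul_set_univ₀ hε.ne', LinearOrderedField.smul_Ioo hε]
  norm_num

lemma scaling_step (n N : ℕ) (hn : n + 1 = N) {ε : ℝ} (hε : 0 < ε) :
    (∫ x in ((univ : Set (Eucl n)) ×ˢ Ioo (0:ℝ) 1),
        (ε / (ε ^ 2 + ‖x.1‖ ^ 2 + x.2 ^ 2)) ^ (N : ℝ))
      = ∫ y in ((univ : Set (Eucl n)) ×ˢ Ioo (0:ℝ) (1/ε)),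
          ((1 : ℝ) + ‖y.1‖ ^ 2 + y.2 ^ 2) ^ (-(N : ℝ)) := by
  have key := MeasureTheory.Measure.setIntegral_comp_smul_of_pos (μ := (volume : Measure (Eucl n × ℝ)))
    (fun x : Eucl n × ℝ => (ε / (ε ^ 2 + ‖x.1‖ ^ 2 + x.2 ^ 2)) ^ (N : ℝ))
    ((univ : Set (Eucl n)) ×ˢ Ioo (0:ℝ) (1/ε)) hε
  rw [smul_slab_eq n hε (1/ε), mul_one_div, div_self hε.ne'] at key
  have hcomp : ∀ y : Eucl n × ℝ,
      (ε / (ε ^ 2 + ‖(ε • y).1‖ ^ 2 + (ε • y).2 ^ 2)) ^ (N : ℝ)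
        = (ε ^ (N : ℕ))⁻¹ * ((1 : ℝ) + ‖y.1‖ ^ 2 + y.2 ^ 2) ^ (-(N : ℝ)) := by
    intro y
    have hden : (0:ℝ) < 1 + ‖y.1‖ ^ 2 + y.2 ^ 2 := by positivity
    have h1 : ε ^ 2 + ‖(ε • y).1‖ ^ 2 + (ε • y).2 ^ 2
        = ε ^ 2 * (1 + ‖y.1‖ ^ 2 + y.2 ^ 2) := by
      have : ‖(ε • y).1‖ = ε * ‖y.1‖ := by
        rw [Prod.smul_fst, norm_smul, Real.norm_eq_abs, abs_of_pos hε]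
      rw [this, Prod.smul_snd, smul_eq_mul]
      ring
    rw [h1]
    have h2 : ε / (ε ^ 2 * (1 + ‖y.1‖ ^ 2 + y.2 ^ 2)) = ε⁻¹ * (1 + ‖y.1‖ ^ 2 + y.2 ^ 2)⁻¹ := by
      field_simp
    rw [h2, Real.mul_rpow (by positivity) (by positivity),
      Real.inv_rpow hε.le, Real.inv_rpow hden.le, ← Real.rpow_neg hden.le,
      Real.rpow_natCast ε N]
  rw [funext hcomp, integral_const_mul, finrank_eucl_prod n, hn, smul_eq_mul] at key
  have hεN : ((ε : ℝ) ^ (N:ℕ) : ℝ) ≠ 0 := pow_ne_zero _ hε.ne'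
  exact (mul_left_cancel₀ (inv_ne_zero hεN) key).symm

lemma split_slab (n N : ℕ) (h : ((n : ℝ) + 1) < 2 * N) {T : ℝ} (hT : 0 < T) :
    (∫ y in ((univ : Set (Eucl n)) ×ˢ Ioo (0:ℝ) T),
        ((1 : ℝ) + ‖y.1‖ ^ 2 + y.2 ^ 2) ^ (-(N : ℝ)))
      = (∫ y in ((univ : Set (Eucl n)) ×ˢ Ioi (0:ℝ)),
          ((1 : ℝ) + ‖y.1‖ ^ 2 + y.2 ^ 2) ^ (-(N : ℝ)))
        - ∫ y in ((univ : Set (Eucl n)) ×ˢ Ici T),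
            ((1 : ℝ) + ‖y.1‖ ^ 2 + y.2 ^ 2) ^ (-(N : ℝ)) := by
  have hunion : ((univ : Set (Eucl n)) ×ˢ Ioo (0:ℝ) T) ∪ ((univ : Set (Eucl n)) ×ˢ Ici T)
      = (univ : Set (Eucl n)) ×ˢ Ioi (0:ℝ) := by
    rw [← prod_union, Ioo_union_Ici_eq_Ioi hT]
  have hdisj : Disjoint ((univ : Set (Eucl n)) ×ˢ Ioo (0:ℝ) T)
      ((univ : Set (Eucl n)) ×ˢ Ici T) := by
    rw [Set.disjoint_left]
    rintro ⟨y, t⟩ ⟨-, -, h1⟩ ⟨-, h2⟩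
    exact absurd h2 (not_le.mpr h1)
  have hint := integrableG n N h
  rw [← hunion, setIntegral_union hdisj (MeasurableSet.univ.prod measurableSet_Ici)
    hint.integrableOn hint.integrableOn]
  ring


set_option maxHeartbeats 1000000 in
/-- asymptotic expansion as ε → 0⁺ of the critical-power integral of
U_ε(x) = c_N (ε/(ε²+|x|²))^{(N-2)/2} over the slab ℝ^{N-1} × (0,1):
∫ U_ε^{2N/(N-2)} = c_N^{2N/(N-2)} [∫_{ℝ^N_+}(1+|y|²)^{-N} − (ε^N/N)∫_{ℝ^{N-1}}(1+|y'|²)^{-N}]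
+ o(ε^N). -/
theorem bubble_critical_integral_expansion (N : ℕ) (hN : 3 ≤ N) (c : ℝ) (hc : 0 < c) :
    (fun ε : ℝ =>
        (∫ x in (Set.univ ×ˢ Set.Ioo (0 : ℝ) 1 : Set (Eucl (N - 1) × ℝ)),
            (c * (ε / (ε ^ 2 + ‖x.1‖ ^ 2 + x.2 ^ 2)) ^ (((N : ℝ) - 2) / 2))
              ^ ((2 * (N : ℝ)) / ((N : ℝ) - 2)))
          - c ^ ((2 * (N : ℝ)) / ((N : ℝ) - 2)) *
            ((∫ y in (Set.univ ×ˢ Set.Ioi (0 : ℝ) : Set (Eucl (N - 1) × ℝ)),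
                (1 + ‖y.1‖ ^ 2 + y.2 ^ 2) ^ (-(N : ℝ)))
              - ε ^ (N : ℝ) / (N : ℝ) *
                ∫ y : Eucl (N - 1), (1 + ‖y‖ ^ 2) ^ (-(N : ℝ))))
      =o[nhdsWithin (0 : ℝ) (Set.Ioi 0)] fun ε => ε ^ (N : ℝ) := by

  have hN0 : (0:ℝ) < N := by positivity
  have hN3 : (3:ℝ) ≤ N := by exact_mod_cast hN
  set n : ℕ := N - 1 with hn_def
  have hn : n + 1 = N := by omega
  have hcast : (n : ℝ) = (N : ℝ) - 1 := by
    have : ((n:ℝ) + 1) = N := by exact_mod_cast congrArg (Nat.cast : ℕ → ℝ) hn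
    linarith
  have hlt : ((n : ℝ) + 1) < 2 * N := by rw [hcast]; linarith
  set p : ℝ := (2 * (N : ℝ)) / ((N : ℝ) - 2) with hp_def
  set K : ℝ := ∫ z : Eucl n, ((1 : ℝ) + ‖z‖ ^ 2) ^ (-(N : ℝ)) with hK_def
  set I : ℝ := ∫ y in ((univ : Set (Eucl n)) ×ˢ Ioi (0:ℝ)),
      ((1 : ℝ) + ‖y.1‖ ^ 2 + y.2 ^ 2) ^ (-(N : ℝ)) with hI_def
  set φint : ℝ → ℝ := fun T => ∫ t in Ioi T, ((1 : ℝ) + t ^ 2) ^ (-((N : ℝ) + 1) / 2) with hφ_def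
  have hqp : ((N : ℝ) - 2) / 2 * ((2 * (N : ℝ)) / ((N : ℝ) - 2)) = (N : ℝ) := by
    have h2 : (N : ℝ) - 2 ≠ 0 := by linarith
    field_simp
  have hexp : (n : ℝ) / 2 - N = -((N : ℝ) + 1) / 2 := by rw [hcast]; ring
  -- eventual equality
  have heq : ∀ ε ∈ Ioo (0:ℝ) 1,
      ((∫ x in (Set.univ ×ˢ Set.Ioo (0 : ℝ) 1 : Set (Eucl (N - 1) × ℝ)),
            (c * (ε / (ε ^ 2 + ‖x.1‖ ^ 2 + x.2 ^ 2)) ^ (((N : ℝ) - 2) / 2)) ^ p)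
          - c ^ p * (I - ε ^ (N : ℝ) / (N : ℝ) * K))
        = c ^ p * K * (ε ^ (N : ℝ) / N - φint (1/ε)) := by
    intro ε hε
    obtain ⟨hε0, hε1⟩ := hε
    have hstep1 : (∫ x in (Set.univ ×ˢ Set.Ioo (0 : ℝ) 1 : Set (Eucl (N - 1) × ℝ)),
          (c * (ε / (ε ^ 2 + ‖x.1‖ ^ 2 + x.2 ^ 2)) ^ (((N : ℝ) - 2) / 2)) ^ p)
        = c ^ p * ∫ x in ((univ : Set (Eucl n)) ×ˢ Ioo (0:ℝ) 1),
            (ε / (ε ^ 2 + ‖x.1‖ ^ 2 + x.2 ^ 2)) ^ (N : ℝ) := by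
      rw [← integral_const_mul]
      apply setIntegral_congr_ae (MeasurableSet.univ.prod measurableSet_Ioo)
      refine Eventually.of_forall fun x _ => ?_
      have hD : (0:ℝ) < ε ^ 2 + ‖x.1‖ ^ 2 + x.2 ^ 2 := by positivity
      have hb : (0:ℝ) ≤ ε / (ε ^ 2 + ‖x.1‖ ^ 2 + x.2 ^ 2) := by positivity
      rw [Real.mul_rpow hc.le (Real.rpow_nonneg hb _), ← Real.rpow_mul hb, hqp]
    have hstep2 := scaling_step n N hn hε0
    have hstep3 := split_slab n N hlt (T := 1/ε) (by positivity)
    have hstep4 : (∫ y in ((univ : Set (Eucl n)) ×ˢ Ici (1/ε : ℝ)),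
          ((1 : ℝ) + ‖y.1‖ ^ 2 + y.2 ^ 2) ^ (-(N : ℝ))) = φint (1/ε) * K := by
      rw [fubini_slab n N hlt (Ici (1/ε)), hexp, hφ_def]
      simp only
      rw [← integral_mul_const, hK_def]
      exact integral_Ici_eq_integral_Ioi
    rw [hstep1, hstep2, hstep3, hstep4, ← hI_def]
    ring
  -- bound
  have hbound : ∀ ε ∈ Ioo (0:ℝ) 1,
      |c ^ p * K * (ε ^ (N : ℝ) / N - φint (1/ε))|
        ≤ (c ^ p * |K| * (((N : ℝ) + 1) / 2)) * ε ^ ((N : ℝ) + 2) := by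
    intro ε hε
    obtain ⟨hε0, hε1⟩ := hε
    have hT1 : (1:ℝ) ≤ 1/ε := by rw [le_div_iff₀ hε0]; linarith
    obtain ⟨hte1, hte2⟩ := tail_est N hN (1/ε) hT1
    have hc1 : ((1:ℝ)/ε) ^ (-(N : ℝ)) = ε ^ (N : ℝ) := by
      rw [one_div, Real.inv_rpow hε0.le, Real.rpow_neg hε0.le, inv_inv]
    have hc2 : ((1:ℝ)/ε) ^ (-(N : ℝ) - 2) = ε ^ ((N : ℝ) + 2) := by
      rw [one_div, Real.inv_rpow hε0.le, show (-(N:ℝ) - 2) = -((N:ℝ)+2) by ring,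
        Real.rpow_neg hε0.le, inv_inv]
    rw [hc1] at hte1 hte2
    rw [hc2] at hte2
    rw [abs_mul]
    have h1 : |ε ^ (N : ℝ) / N - φint (1/ε)| ≤ (((N : ℝ) + 1) / 2) * ε ^ ((N : ℝ) + 2) := by
      rw [abs_of_nonneg hte1]
      exact hte2
    have h2 : |c ^ p * K| = c ^ p * |K| := by
      rw [abs_mul, abs_of_nonneg (Real.rpow_nonneg hc.le _)]
    rw [h2]
    calc c ^ p * |K| * |ε ^ (N : ℝ) / N - φint (1/ε)|
        ≤ c ^ p * |K| * ((((N : ℝ) + 1) / 2) * ε ^ ((N : ℝ) + 2)) := by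
          apply mul_le_mul_of_nonneg_left h1
          positivity
      _ = (c ^ p * |K| * (((N : ℝ) + 1) / 2)) * ε ^ ((N : ℝ) + 2) := by ring
  -- filter facts
  have hmem : Ioo (0:ℝ) 1 ∈ nhdsWithin (0 : ℝ) (Set.Ioi 0) :=
    Ioo_mem_nhdsGT_of_mem ⟨le_refl 0, one_pos⟩
  -- reduce via eventual equality
  have hcongr : (fun ε : ℝ =>
        (∫ x in (Set.univ ×ˢ Set.Ioo (0 : ℝ) 1 : Set (Eucl (N - 1) × ℝ)),
            (c * (ε / (ε ^ 2 + ‖x.1‖ ^ 2 + x.2 ^ 2)) ^ (((N : ℝ) - 2) / 2)) ^ p)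
          - c ^ p * (I - ε ^ (N : ℝ) / (N : ℝ) * K))
      =ᶠ[nhdsWithin (0 : ℝ) (Set.Ioi 0)]
        fun ε => c ^ p * K * (ε ^ (N : ℝ) / N - φint (1/ε)) :=
    eventually_of_mem hmem heq
  -- big-O against ε^(N+2)
  have hO : (fun ε => c ^ p * K * (ε ^ (N : ℝ) / N - φint (1/ε)))
      =O[nhdsWithin (0 : ℝ) (Set.Ioi 0)] fun ε => ε ^ ((N : ℝ) + 2) := by
    rw [Asymptotics.isBigO_iff]
    refine ⟨c ^ p * |K| * (((N : ℝ) + 1) / 2), eventually_of_mem hmem fun ε hε => ?_⟩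
    rw [Real.norm_eq_abs, Real.norm_eq_abs, abs_of_nonneg (Real.rpow_nonneg hε.1.le _)]
    exact hbound ε hε
  -- little-o of ε^(N+2) vs ε^N
  have ho : (fun ε : ℝ => ε ^ ((N : ℝ) + 2))
      =o[nhdsWithin (0 : ℝ) (Set.Ioi 0)] fun ε => ε ^ (N : ℝ) := by
    rw [Asymptotics.isLittleO_iff]
    intro C hC
    have hmem' : Ioo (0:ℝ) (min 1 C) ∈ nhdsWithin (0 : ℝ) (Set.Ioi 0) :=
      Ioo_mem_nhdsGT_of_mem ⟨le_refl 0, lt_min one_pos hC⟩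
    refine eventually_of_mem hmem' fun ε hε => ?_
    obtain ⟨hε0, hεm⟩ := hε
    have hε1 : ε < 1 := lt_of_lt_of_le hεm (min_le_left _ _)
    have hεC : ε < C := lt_of_lt_of_le hεm (min_le_right _ _)
    rw [Real.norm_eq_abs, Real.norm_eq_abs, abs_of_nonneg (Real.rpow_nonneg hε0.le _),
      abs_of_nonneg (Real.rpow_nonneg hε0.le _)]
    have : ε ^ ((N : ℝ) + 2) = ε ^ (N : ℝ) * ε ^ (2:ℝ) := by
      rw [← Real.rpow_add hε0]
    rw [this, mul_comm]
    apply mul_le_mul_of_nonneg_right _ (Real.rpow_nonneg hε0.le _)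
    have he2 : ε ^ (2:ℝ) = ε * ε := by
      rw [show (2:ℝ) = (1:ℝ) + 1 by norm_num, Real.rpow_add hε0, Real.rpow_one]
    rw [he2]
    nlinarith
  exact (hO.trans_isLittleO ho).congr' hcongr.symm EventuallyEq.rfl
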